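/- Fix vectors c_f ∈ ℂ^m, ŷ_f ∈ ℂ^ρ, scalars σ_f ∈ ℝ, and Hermitian positive semidefinite Σ̂_f ∈ ℂ^{ρ×ρ}, for f = 1,…,F. Suppose S := Σ_f σ_f² (Σ̂_f + ŷ_f ŷ_fᴴ) is invertible. Then the function g(W) = Σ_f [ 2 Re(c_fᴴ σ_f W ŷ_f) − σ_f² Tr(Wᴴ W (Σ̂_f + ŷ_f ŷ_fᴴ)) ] over W ∈ ℂ^{m×ρ} attains its unique maximum at W* = (Σ_f σ_f c_f ŷ_fᴴ) S^{-1}. -/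

import Mathlib

open Matrix
open scoped ComplexOrder


lemma real_smul_mat {α β : Type*} (r : ℝ) (M : Matrix α β ℂ) : r • M = (r : ℂ) • M := by
  ext i j; simp [Complex.real_smul]

lemma trace_conj_sq {m ρ : ℕ} (E : Matrix (Fin m) (Fin ρ) ℂ) :
    (Eᴴ * E).trace = ((∑ j, ∑ i, Complex.normSq (E i j) : ℝ) : ℂ) := by
  simp only [Matrix.trace, Matrix.diag, Matrix.mul_apply, Matrix.conjTranspose_apply]
  push_cast
  refine Finset.sum_congr rfl fun j _ => Finset.sum_congr rfl fun i _ => ?_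
  rw [Complex.normSq_eq_conj_mul_self, Complex.star_def]

lemma psd_smul {n : ℕ} {M : Matrix (Fin n) (Fin n) ℂ} (hM : M.PosSemidef) {r : ℝ} (hr : 0 ≤ r) :
    ((r : ℂ) • M).PosSemidef := by
  refine ⟨?_, fun x => ?_⟩
  · unfold Matrix.IsHermitian
    rw [conjTranspose_smul]
    simp [hM.1.eq]
  · exact (hM.smul (by exact_mod_cast hr : (0:ℂ) ≤ r)).2 x

lemma psd_vmv {ρ : ℕ} (y : Fin ρ → ℂ) : (vecMulVec y (star y)).PosSemidef := by
  have h : vecMulVec y (star y) = replicateCol (Fin 1) y * (replicateCol (Fin 1) y)ᴴ := by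
    rw [conjTranspose_replicateCol]; exact vecMulVec_eq (Fin 1) _ _
  rw [h]; exact posSemidef_self_mul_conjTranspose _

lemma dot_eq_trace {m ρ : ℕ} (c : Fin m → ℂ) (y : Fin ρ → ℂ) (W : Matrix (Fin m) (Fin ρ) ℂ) :
    star c ⬝ᵥ W.mulVec y = ((vecMulVec c (star y))ᴴ * W).trace := by
  simp only [Matrix.trace, Matrix.diag, Matrix.mul_apply, Matrix.conjTranspose_apply,
    vecMulVec_apply, dotProduct, mulVec, Pi.star_apply, star_mul']
  rw [Finset.sum_comm]
  refine Finset.sum_congr rfl fun i _ => ?_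
  rw [Finset.mul_sum]
  refine Finset.sum_congr rfl fun j _ => ?_
  simp; ring

open scoped MatrixOrder in
lemma psd_sqrt {n : ℕ} {S : Matrix (Fin n) (Fin n) ℂ} (hS : S.PosSemidef) :
    ∃ R : Matrix (Fin n) (Fin n) ℂ, R * R = S ∧ Rᴴ = R :=
  ⟨CFC.sqrt S, CFC.sqrt_mul_sqrt_self S (Matrix.nonneg_iff_posSemidef.mpr hS),
    (Matrix.nonneg_iff_posSemidef.mp (CFC.sqrt_nonneg S)).1⟩

/-- M-step update of the RFI structure matrix W: the concave quadratic
g(W) = Σ_f [2 Re(c_fᴴ σ_f W ŷ_f) − σ_f² Tr(Wᴴ W (Σ̂_f + ŷ_f ŷ_fᴴ))] attains its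
unique maximum at W* = (Σ_f σ_f c_f ŷ_fᴴ) S⁻¹ with
S = Σ_f σ_f² (Σ̂_f + ŷ_f ŷ_fᴴ). -/
theorem W_update_unique_maximizer (F m ρ : ℕ)
    (c : Fin F → Fin m → ℂ) (yhat : Fin F → Fin ρ → ℂ)
    (σf : Fin F → ℝ)
    (Shat : Fin F → Matrix (Fin ρ) (Fin ρ) ℂ)
    (hShat : ∀ f, (Shat f).PosSemidef)
    (S : Matrix (Fin ρ) (Fin ρ) ℂ)
    (hS : S = ∑ f, (σf f ^ 2) • (Shat f + vecMulVec (yhat f) (star (yhat f))))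
    (hSinv : IsUnit S.det)
    (g : Matrix (Fin m) (Fin ρ) ℂ → ℝ)
    (hg : ∀ W, g W = ∑ f,
      (2 * (star (c f) ⬝ᵥ (σf f • W).mulVec (yhat f)).re -
        σf f ^ 2 * (Wᴴ * W * (Shat f + vecMulVec (yhat f) (star (yhat f)))).trace.re))
    (Wstar : Matrix (Fin m) (Fin ρ) ℂ)
    (hWstar : Wstar = (∑ f, σf f • vecMulVec (c f) (star (yhat f))) * S⁻¹) :
    (∀ W, g W ≤ g Wstar) ∧ (∀ W, g W = g Wstar → W = Wstar) := by
  classical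
  set A : Fin F → Matrix (Fin ρ) (Fin ρ) ℂ :=
    fun f => Shat f + vecMulVec (yhat f) (star (yhat f)) with hAdef
  have hApsd : ∀ f, (A f).PosSemidef := fun f => (hShat f).add (psd_vmv (yhat f))
  have hSpsd : S.PosSemidef := by
    rw [hS]
    refine Finset.sum_induction _ _ (fun a b ha hb => ha.add hb) Matrix.PosSemidef.zero ?_
    intro f _
    rw [real_smul_mat]
    exact psd_smul (hApsd f) (sq_nonneg _)
  have hSherm : Sᴴ = S := hSpsd.1
  set B : Matrix (Fin m) (Fin ρ) ℂ :=
    ∑ f, σf f • vecMulVec (c f) (star (yhat f)) with hBdef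
  have hBW : Wstar * S = B := by
    rw [hWstar, Matrix.mul_assoc, Matrix.nonsing_inv_mul S hSinv, Matrix.mul_one]
  -- g in trace form
  have hgform : ∀ W, g W = 2 * ((Bᴴ * W).trace).re - ((Wᴴ * W * S).trace).re := by
    intro W
    have h1 : (Bᴴ * W).trace = ∑ f, (σf f : ℂ) * ((vecMulVec (c f) (star (yhat f)))ᴴ * W).trace := by
      rw [hBdef, conjTranspose_sum, Matrix.sum_mul, trace_sum]
      refine Finset.sum_congr rfl fun f _ => ?_
      rw [real_smul_mat, conjTranspose_smul, Matrix.smul_mul, trace_smul, smul_eq_mul,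
        Complex.star_def, Complex.conj_ofReal]
    have h2 : ((Wᴴ * W * S).trace) = ∑ f, ((σf f ^ 2 : ℝ) : ℂ) * (Wᴴ * W * A f).trace := by
      rw [hS]
      simp only [real_smul_mat, Matrix.mul_sum, Matrix.mul_smul, trace_sum, trace_smul, smul_eq_mul]
      rfl
    rw [hg, h1, h2, Complex.re_sum, Complex.re_sum, Finset.mul_sum, ← Finset.sum_sub_distrib]
    refine Finset.sum_congr rfl fun f _ => ?_
    have hdot : star (c f) ⬝ᵥ (σf f • W).mulVec (yhat f)
        = (σf f : ℂ) * ((vecMulVec (c f) (star (yhat f)))ᴴ * W).trace := by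
      rw [real_smul_mat, smul_mulVec, dotProduct_smul, smul_eq_mul, dot_eq_trace]
    rw [hdot, Complex.re_ofReal_mul, Complex.re_ofReal_mul]
  -- cross-term symmetry
  have cross : ∀ X Y : Matrix (Fin m) (Fin ρ) ℂ,
      ((Xᴴ * Y * S).trace).re = ((Yᴴ * X * S).trace).re := by
    intro X Y
    have h : (Xᴴ * Y * S).trace = star ((Yᴴ * X * S).trace) := by
      rw [← trace_conjTranspose]
      rw [conjTranspose_mul, conjTranspose_mul, conjTranspose_conjTranspose, hSherm]
      rw [← Matrix.mul_assoc, trace_mul_comm (S * Xᴴ) Y]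
      rw [trace_mul_comm (Xᴴ * Y) S, trace_mul_comm Y (S * Xᴴ), Matrix.mul_assoc]
    rw [h, Complex.star_def, Complex.conj_re]
  -- Bᴴ*W trace = Tr(Wstarᴴ W S)
  have hBtr : ∀ W : Matrix (Fin m) (Fin ρ) ℂ,
      ((Bᴴ * W).trace).re = ((Wstarᴴ * W * S).trace).re := by
    intro W
    rw [← hBW, conjTranspose_mul, hSherm]
    rw [Matrix.mul_assoc, trace_mul_comm S (Wstarᴴ * W), Matrix.mul_assoc]
  -- difference identity
  have hdiff : ∀ W, g Wstar - g W = (((W - Wstar)ᴴ * (W - Wstar) * S).trace).re := by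
    intro W
    have e1 : (W - Wstar)ᴴ * (W - Wstar) * S
        = Wᴴ * W * S - Wᴴ * Wstar * S - Wstarᴴ * W * S + Wstarᴴ * Wstar * S := by
      simp only [conjTranspose_sub, Matrix.sub_mul, Matrix.mul_sub]
      abel
    rw [e1]
    simp only [trace_add, trace_sub, Complex.add_re, Complex.sub_re]
    rw [hgform W, hgform Wstar, hBtr W, hBtr Wstar, cross W Wstar]
    ring
  -- positivity
  have hpos : ∀ D : Matrix (Fin m) (Fin ρ) ℂ,
      0 ≤ (((Dᴴ * D * S).trace).re) ∧ ((((Dᴴ * D * S).trace).re = 0) → D = 0) := by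
    intro D
    obtain ⟨R, hRR, hRh⟩ := psd_sqrt hSpsd
    have key : (Dᴴ * D * S).trace = ((D * R)ᴴ * (D * R)).trace := by
      rw [conjTranspose_mul, hRh, ← hRR]
      rw [Matrix.mul_assoc R Dᴴ (D * R), trace_mul_comm R (Dᴴ * (D * R))]
      rw [Matrix.mul_assoc, Matrix.mul_assoc, Matrix.mul_assoc]
    rw [key, trace_conj_sq]
    constructor
    · simp only [Complex.ofReal_re]
      exact Finset.sum_nonneg fun j _ => Finset.sum_nonneg fun i _ => Complex.normSq_nonneg _
    · intro h0
      have hDR : D * R = 0 := by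
        have hsum : (∑ j, ∑ i, Complex.normSq ((D * R) i j)) = 0 := by
          simpa using h0
        have hall : ∀ j i, Complex.normSq ((D * R) i j) = 0 := by
          intro j i
          have := (Finset.sum_eq_zero_iff_of_nonneg (fun j _ =>
            Finset.sum_nonneg fun i _ => Complex.normSq_nonneg _)).mp hsum j (Finset.mem_univ j)
          exact (Finset.sum_eq_zero_iff_of_nonneg (fun i _ =>
            Complex.normSq_nonneg _)).mp this i (Finset.mem_univ i)
        ext i j
        simpa using Complex.normSq_eq_zero.mp (hall j i)
      have hDS : D * S = 0 := by
        rw [← hRR, ← Matrix.mul_assoc, hDR, Matrix.zero_mul]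
      calc D = D * (S * S⁻¹) := by rw [Matrix.mul_nonsing_inv S hSinv, Matrix.mul_one]
        _ = (D * S) * S⁻¹ := by rw [Matrix.mul_assoc]
        _ = 0 := by rw [hDS, Matrix.zero_mul]
  constructor
  · intro W
    have h1 := (hpos (W - Wstar)).1
    have h2 := hdiff W
    linarith
  · intro W hEq
    have h0 : (((W - Wstar)ᴴ * (W - Wstar) * S).trace).re = 0 := by
      have := hdiff W; rw [hEq] at this; linarith
    have := (hpos (W - Wstar)).2 h0
    exact sub_eq_zero.mp this
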